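/- For the exponential-product kernel k(x,y) = exp(xy/σ²) on a bounded interval 𝒳 ⊂ ℝ, if two compactly supported probability measures μ and ν satisfy MMD(μ, ν; k) = 0, then all moments of μ and ν coincide: E_μ[Xⁿ] = E_ν[Xⁿ] for every n ≥ 0, and hence μ = ν. In particular, MMD²(μ, ν; k) = ∑_{n=0}^∞ (E_μ[Xⁿ] − E_ν[Xⁿ])² / (σ^{2n} n!). -/

import Mathlib

open MeasureTheory


-- helper: a.e. membership
lemma ae_mem_of_compl_null {α : Type*} [MeasurableSpace α] {μ : Measure α} {s : Set α}
    (hs : μ sᶜ = 0) : ∀ᵐ x ∂μ, x ∈ s := by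
  rw [ae_iff]; exact hs

lemma integrable_of_bound {α : Type*} [MeasurableSpace α] {μ : Measure α} [IsFiniteMeasure μ]
    {f : α → ℝ} (hf : AEStronglyMeasurable f μ) {s : Set α} (hs : μ sᶜ = 0) {C : ℝ}
    (hC : ∀ x ∈ s, ‖f x‖ ≤ C) : Integrable f μ := by
  refine Integrable.mono' (integrable_const C) hf ?_
  filter_upwards [ae_mem_of_compl_null hs] with x hx using hC x hx

lemma abs_integral_le {α : Type*} [MeasurableSpace α] {μ : Measure α} [IsProbabilityMeasure μ]
    {f : α → ℝ} {s : Set α} (hs : μ sᶜ = 0) {C : ℝ}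
    (hC : ∀ x ∈ s, ‖f x‖ ≤ C) : |∫ x, f x ∂μ| ≤ C := by
  calc |∫ x, f x ∂μ| ≤ ∫ _x, C ∂μ := by
        rw [← Real.norm_eq_abs]
        refine norm_integral_le_of_norm_le (integrable_const C) ?_
        filter_upwards [ae_mem_of_compl_null hs] with x hx using hC x hx
    _ = C := by simp

lemma exp_series (σ : ℝ) (hσ : 0 < σ) (w : ℝ) :
    Real.exp (w / σ ^ 2) = ∑' n : ℕ, w ^ n / (σ ^ (2 * n) * n.factorial) := by
  rw [Real.exp_eq_exp_ℝ, NormedSpace.exp_eq_tsum_div]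
  refine tsum_congr fun n => ?_
  rw [div_pow, pow_mul]
  field_simp

lemma double_integral_exp (σ R : ℝ) (hσ : 0 < σ) (hR : 0 ≤ R)
    (μ ν : Measure ℝ) [IsProbabilityMeasure μ] [IsProbabilityMeasure ν]
    (hμ : μ (Set.Icc (-R) R)ᶜ = 0) (hν : ν (Set.Icc (-R) R)ᶜ = 0) :
    ∫ x, ∫ y, Real.exp (x * y / σ ^ 2) ∂ν ∂μ
      = ∑' n : ℕ, (∫ x, x ^ n ∂μ) * (∫ y, y ^ n ∂ν) / (σ ^ (2 * n) * n.factorial) := by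
  set S : Set ℝ := Set.Icc (-R) R with hS
  set P : Measure (ℝ × ℝ) := μ.prod ν with hPdef
  have hP : P (S ×ˢ S)ᶜ = 0 := by
    rw [Set.compl_prod_eq_union]
    refine measure_union_null ?_ ?_ <;> rw [hPdef, Measure.prod_prod] <;>
      simp [hμ, hν]
  have habs : ∀ z : ℝ × ℝ, z ∈ S ×ˢ S → |z.1 * z.2| ≤ R * R := by
    rintro ⟨x, y⟩ ⟨hx, hy⟩
    rw [abs_mul]
    exact mul_le_mul (abs_le.mpr hx) (abs_le.mpr hy) (abs_nonneg _) hR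
  have hkercont : Continuous fun z : ℝ × ℝ => Real.exp (z.1 * z.2 / σ ^ 2) := by
    fun_prop
  have hker_int : Integrable (fun z : ℝ × ℝ => Real.exp (z.1 * z.2 / σ ^ 2)) P := by
    refine integrable_of_bound hkercont.aestronglyMeasurable hP
      (C := Real.exp (R * R / σ ^ 2)) ?_
    intro z hz
    rw [Real.norm_eq_abs, abs_of_pos (Real.exp_pos _)]
    exact Real.exp_le_exp.mpr ((div_le_div_iff_of_pos_right (by positivity : (0:ℝ) < σ ^ 2)).mpr
      (le_trans (le_abs_self _) (habs z hz)))
  have key : ∫ x, ∫ y, Real.exp (x * y / σ ^ 2) ∂ν ∂μ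
      = ∫ z : ℝ × ℝ, Real.exp (z.1 * z.2 / σ ^ 2) ∂P := (integral_prod _ hker_int).symm
  rw [key]
  set g : ℕ → ℝ × ℝ → ℝ := fun n z => (z.1 * z.2) ^ n / (σ ^ (2 * n) * n.factorial) with hg
  have hgmeas : ∀ n : ℕ, AEStronglyMeasurable (g n) P := fun n =>
    (Continuous.div_const (by fun_prop) _).aestronglyMeasurable
  have hb : ∀ n : ℕ, ∀ z ∈ S ×ˢ S, ‖g n z‖ ≤ (R * R / σ ^ 2) ^ n / n.factorial := by
    intro n z hz
    rw [hg]
    simp only [Real.norm_eq_abs, abs_div, abs_pow]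
    rw [abs_of_pos (by positivity : (0:ℝ) < σ ^ (2*n) * n.factorial), div_pow, pow_mul,
      div_div]
    have := habs z hz
    gcongr
  have hsum : Summable fun n : ℕ => (R * R / σ ^ 2) ^ n / n.factorial :=
    Real.summable_pow_div_factorial _
  have hlint : ∑' n : ℕ, ∫⁻ z, ‖g n z‖₊ ∂P ≠ ⊤ := by
    have hle : ∀ n : ℕ, ∫⁻ z, ‖g n z‖₊ ∂P
        ≤ ENNReal.ofReal ((R * R / σ ^ 2) ^ n / n.factorial) := by
      intro n
      calc ∫⁻ z, ‖g n z‖₊ ∂P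
          ≤ ∫⁻ _z, ENNReal.ofReal ((R * R / σ ^ 2) ^ n / n.factorial) ∂P := by
            refine lintegral_mono_ae ?_
            filter_upwards [ae_mem_of_compl_null hP] with z hz
            rw [← enorm_eq_nnnorm, ← ofReal_norm]
            exact ENNReal.ofReal_le_ofReal (hb n z hz)
        _ = ENNReal.ofReal ((R * R / σ ^ 2) ^ n / n.factorial) := by simp
    refine ne_of_lt (lt_of_le_of_lt (ENNReal.tsum_le_tsum hle) ?_)
    rw [← ENNReal.ofReal_tsum_of_nonneg (fun n => by positivity) hsum]
    exact ENNReal.ofReal_lt_top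
  have hexp : ∀ z : ℝ × ℝ, Real.exp (z.1 * z.2 / σ ^ 2) = ∑' n : ℕ, g n z := fun z =>
    exp_series σ hσ (z.1 * z.2)
  calc ∫ z : ℝ × ℝ, Real.exp (z.1 * z.2 / σ ^ 2) ∂P
      = ∫ z : ℝ × ℝ, ∑' n : ℕ, g n z ∂P := by simp_rw [hexp]
    _ = ∑' n : ℕ, ∫ z : ℝ × ℝ, g n z ∂P := integral_tsum hgmeas hlint
    _ = ∑' n : ℕ, (∫ x, x ^ n ∂μ) * (∫ y, y ^ n ∂ν) / (σ ^ (2 * n) * n.factorial) := by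
        refine tsum_congr fun n => ?_
        have : ∀ z : ℝ × ℝ, g n z = (z.1 ^ n * z.2 ^ n) / (σ ^ (2 * n) * n.factorial) := by
          intro z; rw [hg]; simp [mul_pow]
        simp_rw [this, div_eq_mul_inv, integral_mul_const]
        rw [integral_prod_mul (L := ℝ) (fun x => x ^ n) (fun y => y ^ n)]

lemma integrable_cont (R : ℝ) {μ : Measure ℝ} [IsFiniteMeasure μ]
    (hμ : μ (Set.Icc (-R) R)ᶜ = 0) {f : ℝ → ℝ} (hf : Continuous f) : Integrable f μ := by
  obtain ⟨C, hC⟩ := isCompact_Icc.exists_bound_of_continuousOn hf.continuousOn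
  exact integrable_of_bound hf.aestronglyMeasurable hμ hC

lemma poly_integral_eq (R : ℝ) (μ ν : Measure ℝ) [IsProbabilityMeasure μ] [IsProbabilityMeasure ν]
    (hμ : μ (Set.Icc (-R) R)ᶜ = 0) (hν : ν (Set.Icc (-R) R)ᶜ = 0)
    (h : ∀ n : ℕ, (∫ x, x ^ n ∂μ) = ∫ x, x ^ n ∂ν) (p : Polynomial ℝ) :
    ∫ x, p.eval x ∂μ = ∫ x, p.eval x ∂ν := by
  have hint : ∀ (τ : Measure ℝ) (_ : IsProbabilityMeasure τ) (_ : τ (Set.Icc (-R) R)ᶜ = 0)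
      (i : ℕ), Integrable (fun x : ℝ => p.coeff i * x ^ i) τ := by
    intro τ hτ hτs i
    exact integrable_cont R hτs (by fun_prop)
  have hev : ∀ x : ℝ, p.eval x = ∑ i ∈ Finset.range (p.natDegree + 1), p.coeff i * x ^ i := by
    intro x; rw [Polynomial.eval_eq_sum_range]
  simp_rw [hev]
  rw [integral_finset_sum _ (fun i _ => hint μ ‹_› hμ i),
    integral_finset_sum _ (fun i _ => hint ν ‹_› hν i)]
  refine Finset.sum_congr rfl fun i _ => ?_
  rw [integral_const_mul, integral_const_mul, h i]

lemma cont_integral_eq (R : ℝ) (hR : 0 ≤ R) (μ ν : Measure ℝ)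
    [IsProbabilityMeasure μ] [IsProbabilityMeasure ν]
    (hμ : μ (Set.Icc (-R) R)ᶜ = 0) (hν : ν (Set.Icc (-R) R)ᶜ = 0)
    (h : ∀ n : ℕ, (∫ x, x ^ n ∂μ) = ∫ x, x ^ n ∂ν) {f : ℝ → ℝ} (hf : Continuous f) :
    ∫ x, f x ∂μ = ∫ x, f x ∂ν := by
  have key : ∀ ε : ℝ, 0 < ε → |(∫ x, f x ∂μ) - ∫ x, f x ∂ν| ≤ 2 * ε := by
    intro ε hε
    obtain ⟨p, hp⟩ := exists_polynomial_near_continuousMap (-R) R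
      ((⟨f, hf⟩ : C(ℝ, ℝ)).restrict (Set.Icc (-R) R)) ε hε
    have hbnd : ∀ x ∈ Set.Icc (-R) R, ‖f x - p.eval x‖ ≤ ε := by
      intro x hx
      have := ContinuousMap.norm_coe_le_norm
        (p.toContinuousMapOn (Set.Icc (-R) R) -
          ((⟨f, hf⟩ : C(ℝ, ℝ)).restrict (Set.Icc (-R) R))) ⟨x, hx⟩
      rw [norm_sub_rev]
      simpa using this.trans hp.le
    have hfa : Integrable f μ := integrable_cont R hμ hf
    have hfb : Integrable f ν := integrable_cont R hν hf
    have hpa : Integrable (fun x => p.eval x) μ :=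
      integrable_cont R hμ (Polynomial.continuous p)
    have hpb : Integrable (fun x => p.eval x) ν :=
      integrable_cont R hν (Polynomial.continuous p)
    have hdiff : (∫ x, f x ∂μ) - ∫ x, f x ∂ν
        = (∫ x, (f x - p.eval x) ∂μ) - ∫ x, (f x - p.eval x) ∂ν := by
      rw [integral_sub hfa hpa, integral_sub hfb hpb,
        poly_integral_eq R μ ν hμ hν h p]
      ring
    rw [hdiff]
    calc |(∫ x, (f x - p.eval x) ∂μ) - ∫ x, (f x - p.eval x) ∂ν|
        ≤ |∫ x, (f x - p.eval x) ∂μ| + |∫ x, (f x - p.eval x) ∂ν| := abs_sub _ _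
      _ ≤ ε + ε := add_le_add (abs_integral_le hμ hbnd) (abs_integral_le hν hbnd)
      _ = 2 * ε := by ring
  have : |(∫ x, f x ∂μ) - ∫ x, f x ∂ν| ≤ 0 := by
    refine le_of_forall_pos_le_add fun ε hε => ?_
    calc |(∫ x, f x ∂μ) - ∫ x, f x ∂ν| ≤ 2 * (ε / 2) := key (ε / 2) (by linarith)
      _ = 0 + ε := by ring
  have := le_antisymm this (abs_nonneg _)
  linarith [abs_eq_zero.mp this, sub_eq_zero.mp (abs_eq_zero.mp this)]

lemma measure_eq_of_moments (R : ℝ) (hR : 0 ≤ R) (μ ν : Measure ℝ)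
    [IsProbabilityMeasure μ] [IsProbabilityMeasure ν]
    (hμ : μ (Set.Icc (-R) R)ᶜ = 0) (hν : ν (Set.Icc (-R) R)ᶜ = 0)
    (h : ∀ n : ℕ, (∫ x, x ^ n ∂μ) = ∫ x, x ^ n ∂ν) : μ = ν := by
  refine ext_of_forall_lintegral_eq_of_IsFiniteMeasure fun f => ?_
  have hc : Continuous fun x : ℝ => (f x : ℝ) := NNReal.continuous_coe.comp f.continuous
  have h1 := cont_integral_eq R hR μ ν hμ hν h hc
  rw [lintegral_coe_eq_integral _ (integrable_cont R hμ hc),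
      lintegral_coe_eq_integral _ (integrable_cont R hν hc), h1]

/-- The squared maximum mean discrepancy between two probability measures on `ℝ` with respect
to a kernel `k`: `MMD²(μ, ν; k) = ∬k dμ⊗dμ + ∬k dν⊗dν − 2∬k dμ⊗dν`. -/
noncomputable def mmdSq (k : ℝ → ℝ → ℝ) (μ ν : Measure ℝ) : ℝ :=
  (∫ x, ∫ x', k x x' ∂μ ∂μ) + (∫ y, ∫ y', k y y' ∂ν ∂ν) - 2 * ∫ x, ∫ y, k x y ∂ν ∂μ

/-- The exponential-product kernel `k(x,y) = exp(xy/σ²)`. -/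
noncomputable def expProdKernel (σ : ℝ) : ℝ → ℝ → ℝ :=
  fun x y => Real.exp (x * y / σ ^ 2)

/-- For the exponential-product kernel `k(x,y) = exp(xy/σ²)` on a bounded
domain `𝒳 ⊂ ℝ`, we have
`MMD²(μ, ν; k) = ∑_{n=0}^∞ (E_μ[Xⁿ] − E_ν[Xⁿ])² / (σ^{2n} n!)`;
in particular, if two compactly supported probability measures `μ` and `ν` satisfy
`MMD(μ, ν; k) = 0`, then all moments of `μ` and `ν` coincide
(`E_μ[Xⁿ] = E_ν[Xⁿ]` for every `n ≥ 0`) and hence `μ = ν`. -/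
theorem stmt_13 (σ : ℝ) (hσ : 0 < σ) (R : ℝ)
    (μ ν : Measure ℝ) [IsProbabilityMeasure μ] [IsProbabilityMeasure ν]
    (hμsupp : μ (Set.Icc (-R) R)ᶜ = 0) (hνsupp : ν (Set.Icc (-R) R)ᶜ = 0) :
    mmdSq (expProdKernel σ) μ ν
        = ∑' n : ℕ, ((∫ x, x ^ n ∂μ) - ∫ x, x ^ n ∂ν) ^ 2 / (σ ^ (2 * n) * n.factorial) ∧
      (mmdSq (expProdKernel σ) μ ν = 0 →
        (∀ n : ℕ, (∫ x, x ^ n ∂μ) = ∫ x, x ^ n ∂ν) ∧ μ = ν) := by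
  have hR : 0 ≤ R := by
    by_contra hRneg
    push_neg at hRneg
    rw [Set.Icc_eq_empty (by intro hc; simp at hc; linarith), Set.compl_empty] at hμsupp
    simp [measure_univ] at hμsupp
  set a : ℕ → ℝ := fun n => ∫ x, x ^ n ∂μ with ha
  set b : ℕ → ℝ := fun n => ∫ x, x ^ n ∂ν with hb
  have hdpos : ∀ n : ℕ, (0:ℝ) < σ ^ (2 * n) * n.factorial := by
    intro n
    have : (0:ℝ) < (n.factorial : ℝ) := by exact_mod_cast n.factorial_pos
    positivity
  have hmom : ∀ (τ : Measure ℝ) (_ : IsProbabilityMeasure τ) (_ : τ (Set.Icc (-R) R)ᶜ = 0)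
      (n : ℕ), |∫ x, x ^ n ∂τ| ≤ R ^ n := by
    intro τ hτ hτs n
    refine abs_integral_le hτs fun x hx => ?_
    rw [Real.norm_eq_abs, abs_pow]
    exact pow_le_pow_left₀ (abs_nonneg _) (abs_le.mpr hx) n
  have hsummable : ∀ (u v : ℕ → ℝ), (∀ n, |u n| ≤ R ^ n) → (∀ n, |v n| ≤ R ^ n) →
      Summable fun n : ℕ => u n * v n / (σ ^ (2 * n) * n.factorial) := by
    intro u v hu hv
    refine Summable.of_norm_bounded (Real.summable_pow_div_factorial (R * R / σ ^ 2)) ?_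
    intro n
    have hrw : (R * R / σ ^ 2) ^ n / n.factorial
        = R ^ n * R ^ n / (σ ^ (2 * n) * n.factorial) := by
      rw [div_pow, pow_mul, mul_pow, div_div]
    rw [hrw, Real.norm_eq_abs, abs_div, abs_of_pos (hdpos n), abs_mul]
    gcongr
    · exact hu n
    · exact hv n
  have haa := hsummable a a (hmom μ ‹_› hμsupp) (hmom μ ‹_› hμsupp)
  have hbb := hsummable b b (hmom ν ‹_› hνsupp) (hmom ν ‹_› hνsupp)
  have hab := hsummable a b (hmom μ ‹_› hμsupp) (hmom ν ‹_› hνsupp)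
  have hmm : mmdSq (expProdKernel σ) μ ν
      = ∑' n : ℕ, (a n - b n) ^ 2 / (σ ^ (2 * n) * n.factorial) := by
    simp only [mmdSq, expProdKernel]
    rw [double_integral_exp σ R hσ hR μ μ hμsupp hμsupp,
      double_integral_exp σ R hσ hR ν ν hνsupp hνsupp,
      double_integral_exp σ R hσ hR μ ν hμsupp hνsupp]
    have hcongr : ∀ n : ℕ, (a n - b n) ^ 2 / (σ ^ (2 * n) * n.factorial)
        = (a n * a n / (σ ^ (2 * n) * n.factorial)
            + b n * b n / (σ ^ (2 * n) * n.factorial))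
          - 2 * (a n * b n / (σ ^ (2 * n) * n.factorial)) := by
      intro n
      field_simp
      ring
    rw [show (∑' n : ℕ, (a n - b n) ^ 2 / (σ ^ (2 * n) * n.factorial))
        = ∑' n : ℕ, ((a n * a n / (σ ^ (2 * n) * n.factorial)
            + b n * b n / (σ ^ (2 * n) * n.factorial))
          - 2 * (a n * b n / (σ ^ (2 * n) * n.factorial))) from tsum_congr hcongr,
      Summable.tsum_sub (haa.add hbb) ((hab.mul_left 2)),
      Summable.tsum_add haa hbb, tsum_mul_left]
  refine ⟨hmm, fun hzero => ?_⟩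
  rw [hmm] at hzero
  have hsq : Summable fun n : ℕ => (a n - b n) ^ 2 / (σ ^ (2 * n) * n.factorial) := by
    refine (((haa.add hbb).sub (hab.mul_left 2)).congr fun n => ?_)
    field_simp
    ring
  have hmeq : ∀ n : ℕ, a n = b n := by
    intro n
    have hle : (a n - b n) ^ 2 / (σ ^ (2 * n) * n.factorial)
        ≤ ∑' m : ℕ, (a m - b m) ^ 2 / (σ ^ (2 * m) * m.factorial) :=
      Summable.le_tsum hsq n fun m _ => by positivity
    rw [hzero] at hle
    have h0 : (a n - b n) ^ 2 / (σ ^ (2 * n) * n.factorial) = 0 :=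
      le_antisymm hle (by positivity)
    have := (div_eq_zero_iff.mp h0).resolve_right (ne_of_gt (hdpos n))
    have := pow_eq_zero_iff (two_ne_zero) |>.mp this
    linarith [sub_eq_zero.mp this]
  exact ⟨hmeq, measure_eq_of_moments R hR μ ν hμsupp hνsupp hmeq⟩
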